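/- The parametric zone graph of an extended 1-clock PTA (1cPTA) is finite: a 1cPTA has only finitely many reachable symbolic states. -/

import Mathlib

namespace PTAPaper

/-- Comparison operators `<, ≤, =, ≥, >`. -/
inductive Cmp : Type
  | lt
  | le
  | eq
  | ge
  | gt

/-- Semantics of a comparison operator on the reals. -/
def Cmp.holds : Cmp → ℝ → ℝ → Prop
  | .lt, a, b => a < b
  | .le, a, b => a ≤ b
  | .eq, a, b => a = b
  | .ge, a, b => b ≤ a
  | .gt, a, b => b < a

/-- A parametric linear term `Σᵢ αᵢ pᵢ + c` over parameters `P`. -/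
structure LinTerm (P : Type) : Type where
  coef : P → ℤ
  const : ℤ

/-- Evaluation of a parametric linear term at a parameter valuation. -/
def LinTerm.eval {P : Type} [Fintype P] (t : LinTerm P) (ρ : P → ℝ) : ℝ :=
  (∑ p, (t.coef p : ℝ) * ρ p) + (t.const : ℝ)

/-- The zero linear term. -/
def zeroTerm (P : Type) : LinTerm P := ⟨fun _ => 0, 0⟩

/-- A guard or invariant of an extended 1-clock PTA: a conjunction of
constraints `x ⋈ lt` on the (unique) clock `x`. -/
abbrev OCConstraint (P : Type) := List (Cmp × LinTerm P)

def OCConstraint.sat {P : Type} [Fintype P] (x : ℝ) (ρ : P → ℝ)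
    (g : OCConstraint P) : Prop :=
  ∀ a ∈ g, a.1.holds x (a.2.eval ρ)

/-- An edge of an extended 1-clock PTA; `reset` tells whether the clock is reset. -/
structure OCEdge (σ L P : Type) : Type where
  src : L
  guard : OCConstraint P
  act : σ
  reset : Bool
  dst : L

/-- An extended 1-clock PTA (1cPTA): a PTA with a single clock, whose guards
and invariants compare the clock with parametric linear terms. -/
structure OCPTA (σ L P : Type) : Type where
  init : L
  inv : L → OCConstraint P
  edges : List (OCEdge σ L P)

/-- The parametric linear terms occurring in the guards and invariants of `A`. -/
def OCPTA.terms {σ L P : Type} (A : OCPTA σ L P) : Set (LinTerm P) :=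
  {t | (∃ l, ∃ a ∈ A.inv l, a.2 = t) ∨ (∃ e ∈ A.edges, ∃ a ∈ e.guard, a.2 = t)}

/-- A (semantic) zone over the single clock and the parameters. -/
abbrev Zone1 (P : Type) := Set (ℝ × (P → ℝ))

/-- Projection of a zone onto the parameters. -/
def Zone1.projP {P : Type} (Z : Zone1 P) : Set (P → ℝ) := {ρ | ∃ x, (x, ρ) ∈ Z}

/-- Time elapsing of a zone. -/
def Zone1.elapse {P : Type} (Z : Zone1 P) : Zone1 P :=
  {xρ | ∃ x d, 0 ≤ d ∧ (x, xρ.2) ∈ Z ∧ xρ.1 = x + d}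

/-- Resetting the clock in a zone (when `b = true`). -/
def Zone1.reset {P : Type} (b : Bool) (Z : Zone1 P) : Zone1 P :=
  if b then {xρ | ∃ x, (x, xρ.2) ∈ Z ∧ xρ.1 = 0} else Z

/-- The zone defined by a constraint. -/
def ocZone {P : Type} [Fintype P] (g : OCConstraint P) : Zone1 P :=
  {xρ | OCConstraint.sat xρ.1 xρ.2 g}

/-- The initial symbolic state `(l₀, (x = 0)↗ ∧ I(l₀))`. -/
def initSym1 {σ L P : Type} [Fintype P] (A : OCPTA σ L P) : L × Zone1 P :=
  (A.init, Zone1.elapse {xρ | xρ.1 = 0} ∩ ocZone (A.inv A.init))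

/-- Successor of a symbolic state via some edge:
`(l', ((C ∧ g)[R←0])↗ ∧ I(l'))`, when nonempty. -/
def OCSucc {σ L P : Type} [Fintype P] (A : OCPTA σ L P)
    (s s' : L × Zone1 P) : Prop :=
  ∃ e ∈ A.edges, e.src = s.1 ∧ s'.1 = e.dst ∧
    s'.2 = Zone1.elapse (Zone1.reset e.reset (s.2 ∩ ocZone e.guard)) ∩
        ocZone (A.inv e.dst) ∧
    s'.2.Nonempty

/-- The reachable symbolic states of the parametric zone graph of `A`
(symbolic states with the same location and the same set of satisfying
valuations are identified). -/
inductive OCReach {σ L P : Type} [Fintype P] (A : OCPTA σ L P) :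
    (L × Zone1 P) → Prop
  | init : OCReach A (initSym1 A)
  | succ {s s' : L × Zone1 P} : OCReach A s → OCSucc A s s' → OCReach A s'

/- Auxiliary material for the proof -/

section Aux

lemma compare_congr' {a b c d : ℝ} (h1 : a < b ↔ c < d) (h2 : b < a ↔ d < c) :
    compare a b = compare c d := by
  rcases lt_trichotomy a b with h | h | h
  · rw [compare_lt_iff_lt.mpr h, eq_comm, compare_lt_iff_lt]
    exact h1.mp h
  · have hcd : c = d := le_antisymm
      (not_lt.mp fun hdc => absurd (h2.mpr hdc) (by simp [h]))
      (not_lt.mp fun hcd => absurd (h1.mpr hcd) (by simp [h]))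
    rw [compare_eq_iff_eq.mpr h, eq_comm, compare_eq_iff_eq]
    exact hcd
  · rw [compare_gt_iff_gt.mpr h, eq_comm, compare_gt_iff_gt]
    exact h2.mp h

lemma lt_iff_of_compare_eq {a b c d : ℝ} (h : compare a b = compare c d) :
    a < b ↔ c < d := by
  rw [← compare_lt_iff_lt, ← compare_lt_iff_lt (a := c), h]

lemma gt_iff_of_compare_eq {a b c d : ℝ} (h : compare a b = compare c d) :
    b < a ↔ d < c := by
  show a > b ↔ c > d
  rw [gt_iff_lt, gt_iff_lt, ← compare_gt_iff_gt, ← compare_gt_iff_gt (a := c), h]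

lemma eq_iff_of_compare_eq {a b c d : ℝ} (h : compare a b = compare c d) :
    a = b ↔ c = d := by
  rw [← compare_eq_iff_eq, ← compare_eq_iff_eq (a := c), h]

lemma le_iff_of_compare_eq {a b c d : ℝ} (h : compare a b = compare c d) :
    a ≤ b ↔ c ≤ d := by
  rw [← not_lt, ← not_lt, gt_iff_of_compare_eq h]

lemma ge_iff_of_compare_eq {a b c d : ℝ} (h : compare a b = compare c d) :
    b ≤ a ↔ d ≤ c := by
  rw [← not_lt, ← not_lt, lt_iff_of_compare_eq h]

/-- Key realization lemma: if two finite families of reals have the same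
order pattern, any position relative to the first can be realized relative
to the second. -/
lemma realize {ι : Type} [Fintype ι] (f g : ι → ℝ)
    (hfg : ∀ i j, f i ≤ f j ↔ g i ≤ g j) (y : ℝ) :
    ∃ y', ∀ i, compare y' (g i) = compare y (f i) := by
  have hlt : ∀ i j, f i < f j ↔ g i < g j := fun i j => by
    rw [← not_le, ← not_le, hfg j i]
  by_cases hex : ∃ i, f i = y
  · obtain ⟨i, hi⟩ := hex
    refine ⟨g i, fun j => compare_congr' ?_ ?_⟩
    · rw [← hi]; exact (hlt i j).symm
    · rw [← hi]; exact (hlt j i).symm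
  · push_neg at hex
    by_cases hlo : ∃ i, f i < y
    · by_cases hhi : ∃ j, y < f j
      · obtain ⟨i₁, hi₁⟩ := hlo
        obtain ⟨j₁, hj₁⟩ := hhi
        obtain ⟨i₀, hi₀, hmax⟩ := Finset.exists_max_image
          (Finset.univ.filter fun i => f i < y) f ⟨i₁, by simp [hi₁]⟩
        obtain ⟨j₀, hj₀, hmin⟩ := Finset.exists_min_image
          (Finset.univ.filter fun j => y < f j) f ⟨j₁, by simp [hj₁]⟩
        simp only [Finset.mem_filter, Finset.mem_univ, true_and] at hi₀ hj₀
        have hij : g i₀ < g j₀ := (hlt i₀ j₀).mp (hi₀.trans hj₀)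
        refine ⟨(g i₀ + g j₀) / 2, fun k => compare_congr' ?_ ?_⟩ <;>
        · rcases lt_trichotomy (f k) y with hk | hk | hk
          · have h1 : g k ≤ g i₀ :=
              (hfg k i₀).mp (hmax k (by simp [hk]))
            constructor <;> intro h <;> [skip; skip] <;>
              first
                | exact absurd hk (by linarith)
                | linarith
          · exact absurd hk (hex k)
          · have h1 : g j₀ ≤ g k :=
              (hfg j₀ k).mp (hmin k (by simp [hk]))
            constructor <;> intro h <;>
              first
                | exact absurd hk (by linarith)
                | linarith
      · push_neg at hhi
        have hall : ∀ j, f j < y := fun j =>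
          lt_of_le_of_ne (hhi j) (hex j)
        obtain ⟨i₁, _⟩ := hlo
        obtain ⟨i₀, _, hmax⟩ := Finset.exists_max_image Finset.univ g
          ⟨i₁, Finset.mem_univ _⟩
        refine ⟨g i₀ + 1, fun k => compare_congr' ?_ ?_⟩
        · have := hmax k (Finset.mem_univ _)
          constructor <;> intro h
          · linarith
          · exact absurd h (not_lt.mpr (hall k).le)
        · simp only [iff_true_intro (hall k), iff_true]
          have := hmax k (Finset.mem_univ _); linarith
    · push_neg at hlo
      have hall : ∀ j, y < f j := fun j =>
        lt_of_le_of_ne (hlo j) (fun h => hex j h.symm)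
      by_cases hne : Nonempty ι
      · obtain ⟨i₁⟩ := hne
        obtain ⟨i₀, _, hmin⟩ := Finset.exists_min_image Finset.univ g
          ⟨i₁, Finset.mem_univ _⟩
        refine ⟨g i₀ - 1, fun k => compare_congr' ?_ ?_⟩
        · simp only [iff_true_intro (hall k), iff_true]
          have := hmin k (Finset.mem_univ _); linarith
        · have := hmin k (Finset.mem_univ _)
          constructor <;> intro h
          · linarith
          · exact absurd h (not_lt.mpr (hall k).le)
      · exact ⟨0, fun i => absurd ⟨i⟩ hne⟩

variable {σ L P : Type} [Fintype P] [Fintype L]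

/-- The list of all linear terms occurring in `A`, together with the zero term. -/
noncomputable def termsList (A : OCPTA σ L P) : List (LinTerm P) :=
  zeroTerm P :: ((Finset.univ.toList.flatMap fun l => (A.inv l).map Prod.snd) ++
    A.edges.flatMap fun e => e.guard.map Prod.snd)

/-- The signature of a point: comparisons of the clock with all terms, and of
all pairs of terms with each other. -/
noncomputable def ptSig (A : OCPTA σ L P) (a : ℝ × (P → ℝ)) :
    (Fin (termsList A).length → Ordering) ×
      (Fin (termsList A).length → Fin (termsList A).length → Ordering) :=
  (fun i => compare a.1 (((termsList A).get i).eval a.2),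
   fun i j => compare (((termsList A).get i).eval a.2)
      (((termsList A).get j).eval a.2))

/-- A zone is saturated when it is a union of signature classes. -/
def SatZ (A : OCPTA σ L P) (Z : Zone1 P) : Prop :=
  ∀ a b : ℝ × (P → ℝ), ptSig A a = ptSig A b → a ∈ Z → b ∈ Z

lemma zeroTerm_eval (ρ : P → ℝ) : (zeroTerm P).eval ρ = 0 := by
  simp [zeroTerm, LinTerm.eval]

lemma termsList_len_pos (A : OCPTA σ L P) : 0 < (termsList A).length := by
  simp [termsList]

lemma get_zero_eval (A : OCPTA σ L P) (ρ : P → ℝ) :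
    ((termsList A).get ⟨0, termsList_len_pos A⟩).eval ρ = 0 := by
  show (zeroTerm P).eval ρ = 0
  simp [zeroTerm, LinTerm.eval]

lemma satZ_inter {A : OCPTA σ L P} {Z Z' : Zone1 P}
    (h : SatZ A Z) (h' : SatZ A Z') : SatZ A (Z ∩ Z') :=
  fun a b hab ha => ⟨h a b hab ha.1, h' a b hab ha.2⟩

lemma Cmp.holds_congr {c : Cmp} {x v x' v' : ℝ}
    (h : compare x v = compare x' v') (hx : c.holds x v) : c.holds x' v' := by
  cases c with
  | lt => exact (lt_iff_of_compare_eq h).mp hx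
  | le => exact (le_iff_of_compare_eq h).mp hx
  | eq => exact (eq_iff_of_compare_eq h).mp hx
  | ge => exact (ge_iff_of_compare_eq h).mp hx
  | gt => exact (gt_iff_of_compare_eq h).mp hx

lemma satZ_ocZone {A : OCPTA σ L P} {g : OCConstraint P}
    (hg : ∀ a ∈ g, a.2 ∈ termsList A) : SatZ A (ocZone g) := by
  rintro a b hab ha c hc
  obtain ⟨i, hi⟩ := List.mem_iff_get.mp (hg c hc)
  have := congrFun (congrArg Prod.fst hab) i
  simp only [ptSig] at this
  rw [hi] at this
  exact Cmp.holds_congr this (ha c hc)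

/-- Saturation is preserved by time elapsing. -/
lemma satZ_elapse {A : OCPTA σ L P} {Z : Zone1 P}
    (h : SatZ A Z) : SatZ A Z.elapse := by
  rintro ⟨x, ρ⟩ ⟨x', ρ'⟩ hab ⟨x₀, d, hd, hmem, hx⟩
  -- extended family: the terms plus the clock value x (resp. x')
  have hsig1 : ∀ i, compare x (((termsList A).get i).eval ρ)
      = compare x' (((termsList A).get i).eval ρ') :=
    fun i => congrFun (congrArg Prod.fst hab) i
  have hsig2 : ∀ i j, compare (((termsList A).get i).eval ρ)
        (((termsList A).get j).eval ρ)
      = compare (((termsList A).get i).eval ρ')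
        (((termsList A).get j).eval ρ') :=
    fun i j => congrFun (congrFun (congrArg Prod.snd hab) i) j
  obtain ⟨y', hy'⟩ := realize
    (fun o : Option (Fin (termsList A).length) =>
      o.elim x (fun i => ((termsList A).get i).eval ρ))
    (fun o => o.elim x' (fun i => ((termsList A).get i).eval ρ'))
    (by
      rintro (_ | i) (_ | j)
      · simp
      · exact le_iff_of_compare_eq (hsig1 j)
      · exact ge_iff_of_compare_eq (hsig1 i)
      · exact le_iff_of_compare_eq (hsig2 i j)) x₀
  have hx2 : x = x₀ + d := hx
  have hy'x : y' ≤ x' := by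
    have := hy' none
    simp only [Option.elim] at this
    exact (le_iff_of_compare_eq this).mpr (by linarith)
  have hmem' : (y', ρ') ∈ Z := by
    refine h (x₀, ρ) (y', ρ') ?_ hmem
    refine Prod.ext ?_ ?_
    · funext i
      exact (hy' (some i)).symm
    · funext i j
      exact hsig2 i j
  exact ⟨y', x' - y', by linarith, hmem', by show x' = y' + (x' - y'); ring⟩

/-- Saturation is preserved by clock reset. -/
lemma satZ_reset {A : OCPTA σ L P} {Z : Zone1 P} (b : Bool)
    (h : SatZ A Z) : SatZ A (Zone1.reset b Z) := by
  cases b with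
  | false => simpa [Zone1.reset] using h
  | true =>
    rintro ⟨x, ρ⟩ ⟨x', ρ'⟩ hab ha
    simp only [Zone1.reset, if_pos, Set.mem_setOf_eq] at ha ⊢
    obtain ⟨y, hy, hx0⟩ := ha
    have hsig1 : ∀ i, compare x (((termsList A).get i).eval ρ)
        = compare x' (((termsList A).get i).eval ρ') :=
      fun i => congrFun (congrArg Prod.fst hab) i
    have hsig2 : ∀ i j, compare (((termsList A).get i).eval ρ)
          (((termsList A).get j).eval ρ)
        = compare (((termsList A).get i).eval ρ')
          (((termsList A).get j).eval ρ') :=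
      fun i j => congrFun (congrFun (congrArg Prod.snd hab) i) j
    have hx'0 : x' = 0 := by
      have := hsig1 ⟨0, termsList_len_pos A⟩
      rw [get_zero_eval, get_zero_eval] at this
      exact (eq_iff_of_compare_eq this).mp (by simpa using hx0)
    obtain ⟨y', hy'⟩ := realize
      (fun i => ((termsList A).get i).eval ρ)
      (fun i => ((termsList A).get i).eval ρ')
      (fun i j => le_iff_of_compare_eq (hsig2 i j)) y
    refine ⟨y', ?_, hx'0⟩
    refine h (y, ρ) (y', ρ') ?_ hy
    refine Prod.ext ?_ ?_
    · funext i
      exact (hy' i).symm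
    · funext i j
      exact hsig2 i j

lemma satZ_x_eq_zero (A : OCPTA σ L P) :
    SatZ A {xρ : ℝ × (P → ℝ) | xρ.1 = 0} := by
  rintro ⟨x, ρ⟩ ⟨x', ρ'⟩ hab (hx : x = 0)
  have := congrFun (congrArg Prod.fst hab) ⟨0, termsList_len_pos A⟩
  simp only [ptSig] at this
  rw [get_zero_eval, get_zero_eval] at this
  exact (eq_iff_of_compare_eq this).mp hx

lemma inv_terms_mem (A : OCPTA σ L P) (l : L) :
    ∀ a ∈ A.inv l, a.2 ∈ termsList A := by
  intro a ha
  simp only [termsList, List.mem_cons, List.mem_append, List.mem_flatMap,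
    List.mem_map]
  exact Or.inr (Or.inl ⟨l, by simp [Finset.mem_toList], a, ha, rfl⟩)

lemma guard_terms_mem (A : OCPTA σ L P) {e : OCEdge σ L P}
    (he : e ∈ A.edges) : ∀ a ∈ e.guard, a.2 ∈ termsList A := by
  intro a ha
  simp only [termsList, List.mem_cons, List.mem_append, List.mem_flatMap,
    List.mem_map]
  exact Or.inr (Or.inr ⟨e, he, a, ha, rfl⟩)

lemma satZ_reach {A : OCPTA σ L P} {s : L × Zone1 P}
    (h : OCReach A s) : SatZ A s.2 := by
  induction h with
  | init =>
    exact satZ_inter (satZ_elapse (satZ_x_eq_zero A))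
      (satZ_ocZone (inv_terms_mem A A.init))
  | @succ s s' _ hsucc ih =>
    obtain ⟨e, he, _, _, hz, _⟩ := hsucc
    rw [hz]
    exact satZ_inter
      (satZ_elapse (satZ_reset e.reset
        (satZ_inter ih (satZ_ocZone (guard_terms_mem A he)))))
      (satZ_ocZone (inv_terms_mem A e.dst))

instance : Finite Ordering := by
  refine Finite.of_injective (fun o => match o with
    | .lt => (0 : Fin 3) | .eq => 1 | .gt => 2) ?_
  intro a b h
  cases a <;> cases b <;> revert h <;> decide

lemma satZ_finite (A : OCPTA σ L P) : {Z : Zone1 P | SatZ A Z}.Finite := by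
  have hsub : {Z : Zone1 P | SatZ A Z} ⊆
      Set.range (fun S : Set ((Fin (termsList A).length → Ordering) ×
        (Fin (termsList A).length → Fin (termsList A).length → Ordering)) =>
        ptSig A ⁻¹' S) := by
    intro Z hZ
    refine ⟨ptSig A '' Z, ?_⟩
    ext a
    constructor
    · rintro ⟨b, hb, hba⟩
      exact hZ b a hba hb
    · intro ha
      exact ⟨a, ha, rfl⟩
  haveI : Finite (Set ((Fin (termsList A).length → Ordering) ×
      (Fin (termsList A).length → Fin (termsList A).length → Ordering))) :=
    Finite.of_equiv _ (Equiv.refl _)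
  exact (Set.finite_range _).subset hsub

end Aux

/-- **Finiteness of the parametric zone graph of a 1cPTA** (Theorem 26). An
extended 1-clock PTA has only finitely many reachable symbolic states. -/
theorem zone_graph_finite {σ L P : Type} [Fintype P] [Fintype L]
    (A : OCPTA σ L P) :
    {s : L × Zone1 P | OCReach A s}.Finite := by
  have hsub : {s : L × Zone1 P | OCReach A s} ⊆
      (Set.univ : Set L) ×ˢ {Z : Zone1 P | SatZ A Z} :=
    fun s hs => ⟨Set.mem_univ _, satZ_reach hs⟩
  exact (Set.finite_univ.prod (satZ_finite A)).subset hsub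

end PTAPaper
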